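/- Let H ∈ ℂ^{N_r×N_t} have compact SVD H = U Σ Vᴴ with U ∈ ℂ^{N_r×L}, and let Ŵ, Û ∈ ℂ^{N_r×L} be semi-unitary matrices with ‖Ŵ − Û‖_F ≤ δ₁. Define η_c(Ŵ) = tr(Ŵᴴ H Hᴴ Ŵ)/tr(Hᴴ H). Then √(η_c(Ŵ)) ≥ σ_L(Ûᴴ U) − δ₁, where σ_L denotes the L-th largest singular value. -/

import Mathlib

open Matrix

/-- The `i`-th largest singular value (0-indexed) of a complex matrix. -/
noncomputable def svalDesc {m n : ℕ} (A : Matrix (Fin m) (Fin n) ℂ) (i : Fin m) : ℝ :=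
  Real.sqrt ((Matrix.isHermitian_mul_conjTranspose_self A).eigenvalues
    (Tuple.sort ((Matrix.isHermitian_mul_conjTranspose_self A).eigenvalues) i.rev))

/-- The squared Frobenius norm. -/
noncomputable def frobSq {m n : Type*} [Fintype m] [Fintype n] (A : Matrix m n ℂ) : ℝ :=
  ∑ i, ∑ j, ‖A i j‖ ^ 2

namespace ColAux

lemma re_conj_mul (z : ℂ) : ((starRingEnd ℂ) z * z).re = ‖z‖ ^ 2 := by
  rw [mul_comm, Complex.mul_conj, Complex.ofReal_re, ← Complex.sq_norm]

lemma re_star_dot {n : Type*} [Fintype n] (v : n → ℂ) :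
    (star v ⬝ᵥ v).re = ∑ i, ‖v i‖ ^ 2 := by
  unfold dotProduct
  rw [Complex.re_sum]
  exact Finset.sum_congr rfl fun i _ => re_conj_mul _

lemma frobSq_nonneg {m n : Type*} [Fintype m] [Fintype n] (A : Matrix m n ℂ) :
    0 ≤ frobSq A :=
  Finset.sum_nonneg fun _ _ => Finset.sum_nonneg fun _ _ => sq_nonneg _

lemma frobSq_conjTranspose {m n : Type*} [Fintype m] [Fintype n] (A : Matrix m n ℂ) :
    frobSq Aᴴ = frobSq A := by
  unfold frobSq
  rw [Finset.sum_comm]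
  simp [conjTranspose_apply]

lemma trace_conjTranspose_mul_re {m n : Type*} [Fintype m] [Fintype n] (A : Matrix m n ℂ) :
    (Matrix.trace (Aᴴ * A)).re = frobSq A := by
  unfold Matrix.trace frobSq
  rw [Complex.re_sum, Finset.sum_comm]
  apply Finset.sum_congr rfl
  intro i _
  have h : (Aᴴ * A).diag i = ∑ k, (starRingEnd ℂ) (A k i) * A k i := by
    simp [Matrix.diag, Matrix.mul_apply, conjTranspose_apply]
  rw [h, Complex.re_sum]
  exact Finset.sum_congr rfl fun k _ => re_conj_mul _

/-- Triangle inequality for the Frobenius norm. -/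
lemma sqrt_frobSq_add_le {m n : Type*} [Fintype m] [Fintype n] (A B : Matrix m n ℂ) :
    Real.sqrt (frobSq (A + B)) ≤ Real.sqrt (frobSq A) + Real.sqrt (frobSq B) := by
  have key : ∀ C : Matrix m n ℂ,
      Real.sqrt (frobSq C) =
        ‖(WithLp.equiv 2 (m × n → ℂ)).symm (fun p => C p.1 p.2)‖ := by
    intro C
    rw [EuclideanSpace.norm_eq]
    congr 1
    simp only [WithLp.equiv_symm_apply, PiLp.toLp_apply]
    exact (Fintype.sum_prod_type' (f := fun a b => ‖C a b‖ ^ 2)).symm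
  rw [key, key, key]
  have hadd : (WithLp.equiv 2 (m × n → ℂ)).symm (fun p => (A + B) p.1 p.2)
      = (WithLp.equiv 2 (m × n → ℂ)).symm (fun p => A p.1 p.2)
        + (WithLp.equiv 2 (m × n → ℂ)).symm (fun p => B p.1 p.2) := rfl
  rw [hadd]
  exact norm_add_le _ _

/-- Cauchy–Schwarz / submultiplicativity of the squared Frobenius norm. -/
lemma frobSq_mul_le {m n p : Type*} [Fintype m] [Fintype n] [Fintype p]
    (A : Matrix m n ℂ) (B : Matrix n p ℂ) :
    frobSq (A * B) ≤ frobSq A * frobSq B := by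
  unfold frobSq
  calc ∑ i, ∑ j, ‖(A * B) i j‖ ^ 2
      ≤ ∑ i, ∑ j, (∑ k, ‖A i k‖ ^ 2) * (∑ k, ‖B k j‖ ^ 2) := by
        apply Finset.sum_le_sum; intro i _
        apply Finset.sum_le_sum; intro j _
        have h1 : ‖(A * B) i j‖ ≤ ∑ k, ‖A i k‖ * ‖B k j‖ := by
          rw [Matrix.mul_apply]
          refine (norm_sum_le _ _).trans_eq ?_
          exact Finset.sum_congr rfl fun k _ => norm_mul _ _
        calc ‖(A * B) i j‖ ^ 2 ≤ (∑ k, ‖A i k‖ * ‖B k j‖) ^ 2 :=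
              pow_le_pow_left₀ (norm_nonneg _) h1 2
          _ ≤ (∑ k, ‖A i k‖ ^ 2) * (∑ k, ‖B k j‖ ^ 2) :=
              Finset.sum_mul_sq_le_sq_mul_sq _ _ _
    _ = (∑ i, ∑ k, ‖A i k‖ ^ 2) * (∑ k, ∑ j, ‖B k j‖ ^ 2) := by
        rw [Finset.sum_comm (f := fun k j => ‖B k j‖ ^ 2)]
        exact (Finset.sum_mul_sum _ _ _ _).symm

/-- Rayleigh quotient lower bound for a Hermitian matrix. -/
lemma rayleigh {n : ℕ} {P : Matrix (Fin n) (Fin n) ℂ} (hP : P.IsHermitian) (c : ℝ)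
    (hc : ∀ i, c ≤ hP.eigenvalues i) (x : Fin n → ℂ) :
    c * ∑ i, ‖x i‖ ^ 2 ≤ (star x ⬝ᵥ P *ᵥ x).re := by
  set Q : Matrix (Fin n) (Fin n) ℂ := (hP.eigenvectorUnitary : Matrix (Fin n) (Fin n) ℂ) with hQdef
  set y : Fin n → ℂ := star Q *ᵥ x with hydef
  have hvecmul : star x ᵥ* Q = star y := by
    rw [hydef, Matrix.star_mulVec, Matrix.star_eq_conjTranspose, conjTranspose_conjTranspose]
  have hmain : star x ⬝ᵥ P *ᵥ x
      = star y ⬝ᵥ (Matrix.diagonal ((↑) ∘ hP.eigenvalues) *ᵥ y) := by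
    conv_lhs => rw [hP.spectral_theorem, Unitary.conjStarAlgAut_apply]
    rw [← Matrix.mulVec_mulVec, ← Matrix.mulVec_mulVec, Matrix.dotProduct_mulVec, hvecmul]
    rfl
  have hQ1 : Q * Qᴴ = 1 := by
    rw [← Matrix.star_eq_conjTranspose, hQdef, ← Unitary.coe_star]
    exact Unitary.coe_mul_star_self _
  have hnorm : ∑ i, ‖y i‖ ^ 2 = ∑ i, ‖x i‖ ^ 2 := by
    rw [← re_star_dot, ← re_star_dot]
    congr 1
    rw [hydef, Matrix.star_mulVec, Matrix.star_eq_conjTranspose, conjTranspose_conjTranspose,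
      ← Matrix.dotProduct_mulVec, Matrix.mulVec_mulVec, hQ1, Matrix.one_mulVec]
  have hdiag : (star y ⬝ᵥ (Matrix.diagonal ((↑) ∘ hP.eigenvalues) *ᵥ y)).re
      = ∑ i, hP.eigenvalues i * ‖y i‖ ^ 2 := by
    unfold dotProduct
    rw [Complex.re_sum]
    apply Finset.sum_congr rfl
    intro i _
    rw [Matrix.mulVec_diagonal]
    simp only [Function.comp_apply]
    have : star y i * ((hP.eigenvalues i : ℂ) * y i)
        = (hP.eigenvalues i : ℂ) * ((starRingEnd ℂ) (y i) * y i) := by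
      simp only [Pi.star_apply, Complex.star_def]; ring
    rw [this, Complex.re_ofReal_mul, re_conj_mul]
  rw [hmain, hdiag, ← hnorm, Finset.mul_sum]
  apply Finset.sum_le_sum
  intro i _
  exact mul_le_mul_of_nonneg_right (hc i) (by positivity)

/-- Minimum eigenvalue bound transfers from `A * Aᴴ` to the quadratic form of `Aᴴ * A`. -/
lemma rayleigh_conjTranspose_mul_self {L : ℕ} (A : Matrix (Fin L) (Fin L) ℂ) (c : ℝ)
    (hc : ∀ i, c ≤ (Matrix.isHermitian_mul_conjTranspose_self A).eigenvalues i)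
    (x : Fin L → ℂ) :
    c * ∑ i, ‖x i‖ ^ 2 ≤ (star x ⬝ᵥ (Aᴴ * A) *ᵥ x).re := by
  set hB := Matrix.isHermitian_conjTranspose_mul_self A with hBdef
  apply rayleigh hB
  intro j
  set v : Fin L → ℂ := ⇑(hB.eigenvectorBasis j) with hvdef
  have hv : (Aᴴ * A) *ᵥ v = hB.eigenvalues j • v := hB.mulVec_eigenvectorBasis j
  have hv0 : v ≠ 0 := by
    intro h
    have h1 : ‖hB.eigenvectorBasis j‖ = 1 := hB.eigenvectorBasis.orthonormal.1 j
    have h2 : hB.eigenvectorBasis j = 0 := WithLp.ofLp_injective 2 h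
    rw [h2, norm_zero] at h1
    exact absurd h1 (by norm_num)
  by_cases hAv : A *ᵥ v = 0
  · -- eigenvalue is 0 and A is singular
    have hmu : hB.eigenvalues j = 0 := by
      have h0 : hB.eigenvalues j • v = 0 := by
        rw [← hv, ← Matrix.mulVec_mulVec, hAv, Matrix.mulVec_zero]
      rcases smul_eq_zero.mp h0 with h | h
      · exact h
      · exact absurd h hv0
    have hdet : A.det = 0 := by
      rw [← Matrix.exists_mulVec_eq_zero_iff]
      exact ⟨v, hv0, hAv⟩
    have hdet2 : (A * Aᴴ).det = 0 := by
      rw [Matrix.det_mul, hdet, zero_mul]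
    have hprod := (Matrix.isHermitian_mul_conjTranspose_self A).det_eq_prod_eigenvalues
    rw [hdet2] at hprod
    obtain ⟨i, _, hi⟩ := Finset.prod_eq_zero_iff.mp hprod.symm
    have : (Matrix.isHermitian_mul_conjTranspose_self A).eigenvalues i = 0 :=
      Complex.ofReal_eq_zero.mp hi
    rw [hmu]
    calc c ≤ _ := hc i
      _ = 0 := this
  · -- A *ᵥ v is an eigenvector of A * Aᴴ with the same eigenvalue
    set w : Fin L → ℂ := A *ᵥ v with hwdef
    have hw : (A * Aᴴ) *ᵥ w = hB.eigenvalues j • w := by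
      rw [hwdef, Matrix.mulVec_mulVec, Matrix.mul_assoc, ← Matrix.mulVec_mulVec, hv,
        Matrix.mulVec_smul]
    have hray := rayleigh (Matrix.isHermitian_mul_conjTranspose_self A) c hc w
    rw [hw] at hray
    have hsmul : (star w ⬝ᵥ hB.eigenvalues j • w).re
        = hB.eigenvalues j * ∑ i, ‖w i‖ ^ 2 := by
      rw [show hB.eigenvalues j • w = (hB.eigenvalues j : ℂ) • w by
        ext i; simp [Complex.real_smul]]
      rw [dotProduct_smul]
      rw [show ((hB.eigenvalues j : ℂ) • (star w ⬝ᵥ w)) = (hB.eigenvalues j : ℂ) * (star w ⬝ᵥ w) from rfl]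
      rw [Complex.re_ofReal_mul, re_star_dot]
    rw [hsmul] at hray
    have hwpos : 0 < ∑ i, ‖w i‖ ^ 2 := by
      obtain ⟨i, hi⟩ := Function.ne_iff.mp hAv
      have hi' : w i ≠ 0 := by simpa using hi
      exact Finset.sum_pos' (fun k _ => by positivity)
        ⟨i, Finset.mem_univ i, pow_pos (norm_pos_iff.mpr hi') 2⟩
    exact le_of_mul_le_mul_right hray hwpos

/-- The sorted-smallest eigenvalue is a lower bound for all of them. -/
lemma sorted_zero_le {n : ℕ} (hn : 0 < n) (f : Fin n → ℝ) (j : Fin n) :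
    f (Tuple.sort f ⟨0, hn⟩) ≤ f j := by
  obtain ⟨k, hk⟩ := (Tuple.sort f).surjective j
  have := Tuple.monotone_sort f (show (⟨0, hn⟩ : Fin n) ≤ k from Fin.mk_le_of_le_val (Nat.zero_le _))
  simpa [Function.comp, hk] using this

end ColAux

lemma ColAux.frobSq_neg {m n : Type*} [Fintype m] [Fintype n] (A : Matrix m n ℂ) :
    frobSq (-A) = frobSq A := by
  unfold frobSq; simp

open ColAux

/-- Column subspace accuracy bound: if `H = U Σ Vᴴ` is a compact SVD and `Ŵ, Û` are
semi-unitary with `‖Ŵ − Û‖_F ≤ δ₁`, then `√(η_c(Ŵ)) ≥ σ_L(Ûᴴ U) − δ₁`. -/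
theorem column_subspace_accuracy_bound {Nr Nt L : ℕ} (hL : 0 < L)
    (H : Matrix (Fin Nr) (Fin Nt) ℂ)
    (U : Matrix (Fin Nr) (Fin L) ℂ) (s : Fin L → ℝ) (V : Matrix (Fin Nt) (Fin L) ℂ)
    (hU : Uᴴ * U = 1) (hV : Vᴴ * V = 1) (hs : ∀ i, 0 < s i)
    (hSVD : H = U * Matrix.diagonal (fun i => (s i : ℂ)) * Vᴴ)
    (What Uhat : Matrix (Fin Nr) (Fin L) ℂ)
    (hW : Whatᴴ * What = 1) (hUhat : Uhatᴴ * Uhat = 1)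
    (δ1 : ℝ) (hδ : Real.sqrt (frobSq (What - Uhat)) ≤ δ1) :
    Real.sqrt ((Matrix.trace (Whatᴴ * H * Hᴴ * What)).re / (Matrix.trace (Hᴴ * H)).re)
      ≥ svalDesc (Uhatᴴ * U) ⟨L - 1, by omega⟩ - δ1 := by
  set D : Matrix (Fin L) (Fin L) ℂ := Matrix.diagonal (fun i => (s i : ℂ)) with hD
  set M : Matrix (Fin L) (Fin L) ℂ := Uhatᴴ * U with hM
  set T : ℝ := ∑ i, s i ^ 2 with hTdef
  have hDH : Dᴴ = D := by
    rw [hD, Matrix.diagonal_conjTranspose]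
    have : (star fun i => ((s i : ℂ))) = fun i => ((s i : ℂ)) := by
      funext i
      simp only [Pi.star_apply, Complex.star_def]
      exact Complex.conj_ofReal _
    rw [this]
  -- trace of Hᴴ H
  have key : Hᴴ * H = V * (D * (D * Vᴴ)) := by
    rw [hSVD]
    simp only [conjTranspose_mul, conjTranspose_conjTranspose, hDH, Matrix.mul_assoc]
    rw [← Matrix.mul_assoc Uᴴ U, hU, Matrix.one_mul]
  have hHH : (Matrix.trace (Hᴴ * H)).re = T := by
    rw [key, Matrix.trace_mul_comm]
    rw [show D * (D * Vᴴ) * V = D * (D * (Vᴴ * V)) by simp only [Matrix.mul_assoc]]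
    rw [hV, Matrix.mul_one, hD, Matrix.diagonal_mul_diagonal, Matrix.trace_diagonal,
      Complex.re_sum, hTdef]
    exact Finset.sum_congr rfl fun i _ => by
      rw [← Complex.ofReal_mul, Complex.ofReal_re, sq]
  have hTpos : 0 < T :=
    Finset.sum_pos (fun i _ => pow_pos (hs i) 2) ⟨⟨0, hL⟩, Finset.mem_univ _⟩
  have hfrobH : frobSq H = T := by rw [← trace_conjTranspose_mul_re, hHH]
  -- smallest singular value of M
  set lam : ℝ := (Matrix.isHermitian_mul_conjTranspose_self M).eigenvalues
    (Tuple.sort (Matrix.isHermitian_mul_conjTranspose_self M).eigenvalues ⟨0, hL⟩) with hlam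
  have hlam_nonneg : 0 ≤ lam :=
    Matrix.eigenvalues_self_mul_conjTranspose_nonneg M _
  have hcmin : ∀ i, lam ≤ (Matrix.isHermitian_mul_conjTranspose_self M).eigenvalues i :=
    sorted_zero_le hL (Matrix.isHermitian_mul_conjTranspose_self M).eigenvalues
  have hsval : svalDesc M ⟨L - 1, by omega⟩ = Real.sqrt lam := by
    unfold svalDesc
    congr 3
    ext
    simp [Fin.rev]
    omega
  -- column norms of M are bounded below by lam
  have hcol : ∀ j, lam ≤ ∑ i, ‖M i j‖ ^ 2 := by
    intro j
    have h := rayleigh_conjTranspose_mul_self M lam hcmin (Pi.single j 1)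
    have hL1 : ∑ i, ‖(Pi.single j 1 : Fin L → ℂ) i‖ ^ 2 = 1 := by
      simp [Pi.single_apply, apply_ite]
    have hR : (star (Pi.single j 1 : Fin L → ℂ) ⬝ᵥ (Mᴴ * M) *ᵥ Pi.single j 1).re
        = ∑ i, ‖M i j‖ ^ 2 := by
      rw [show star (Pi.single j 1 : Fin L → ℂ) = Pi.single j 1 by
        funext i; simp [Pi.single_apply, apply_ite]]
      rw [single_dotProduct, one_mul, Matrix.mulVec_single]
      simp only [Pi.smul_apply, Matrix.col_apply, op_smul_eq_mul, mul_one]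
      rw [show (Mᴴ * M) j j = ∑ k, (starRingEnd ℂ) (M k j) * M k j by
        simp [Matrix.mul_apply, conjTranspose_apply]]
      rw [Complex.re_sum]
      exact Finset.sum_congr rfl fun k _ => re_conj_mul _
    rw [hL1, mul_one, hR] at h
    exact h
  -- lower bound on frobSq (Uhatᴴ H)
  have hfrobU : lam * T ≤ frobSq (Uhatᴴ * H) := by
    have hUhatH : Uhatᴴ * H = M * D * Vᴴ := by
      rw [hSVD, hM]
      simp only [Matrix.mul_assoc]
    have e1 : frobSq (Uhatᴴ * H) = frobSq (M * D) := by
      rw [← trace_conjTranspose_mul_re, ← trace_conjTranspose_mul_re (M * D)]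
      congr 1
      rw [hUhatH]
      rw [show (M * D * Vᴴ)ᴴ * (M * D * Vᴴ) = V * ((M * D)ᴴ * (M * D) * Vᴴ) by
        rw [conjTranspose_mul (M * D) Vᴴ, conjTranspose_conjTranspose]
        simp only [Matrix.mul_assoc]]
      rw [Matrix.trace_mul_comm V ((M * D)ᴴ * (M * D) * Vᴴ)]
      rw [show (M * D)ᴴ * (M * D) * Vᴴ * V = (M * D)ᴴ * (M * D) * (Vᴴ * V) by
        simp only [Matrix.mul_assoc]]
      rw [hV, Matrix.mul_one]
    have e2 : frobSq (M * D) = ∑ j, (∑ i, ‖M i j‖ ^ 2) * s j ^ 2 := by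
      unfold frobSq
      rw [Finset.sum_comm]
      apply Finset.sum_congr rfl; intro j _
      rw [Finset.sum_mul]
      apply Finset.sum_congr rfl; intro i _
      rw [hD, Matrix.mul_diagonal, norm_mul, mul_pow]
      congr 1
      rw [Complex.norm_real, Real.norm_eq_abs, sq_abs]
    rw [e1, e2, hTdef, Finset.mul_sum]
    exact Finset.sum_le_sum fun j _ =>
      mul_le_mul_of_nonneg_right (hcol j) (sq_nonneg _)
  -- error term
  have herr : Real.sqrt (frobSq ((What - Uhat)ᴴ * H)) ≤ δ1 * Real.sqrt T := by
    calc Real.sqrt (frobSq ((What - Uhat)ᴴ * H))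
        ≤ Real.sqrt (frobSq (What - Uhat)ᴴ * frobSq H) :=
          Real.sqrt_le_sqrt (frobSq_mul_le _ _)
      _ = Real.sqrt (frobSq (What - Uhat)) * Real.sqrt T := by
          rw [frobSq_conjTranspose, hfrobH, Real.sqrt_mul (frobSq_nonneg _)]
      _ ≤ δ1 * Real.sqrt T :=
          mul_le_mul_of_nonneg_right hδ (Real.sqrt_nonneg _)
  -- triangle inequality
  have htri : Real.sqrt (frobSq (Uhatᴴ * H))
      ≤ Real.sqrt (frobSq (Whatᴴ * H)) + Real.sqrt (frobSq ((What - Uhat)ᴴ * H)) := by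
    have hdec : Uhatᴴ * H = Whatᴴ * H + -((What - Uhat)ᴴ * H) := by
      rw [conjTranspose_sub, Matrix.sub_mul]
      abel
    calc Real.sqrt (frobSq (Uhatᴴ * H))
        = Real.sqrt (frobSq (Whatᴴ * H + -((What - Uhat)ᴴ * H))) := by rw [← hdec]
      _ ≤ Real.sqrt (frobSq (Whatᴴ * H)) + Real.sqrt (frobSq (-((What - Uhat)ᴴ * H))) :=
          sqrt_frobSq_add_le _ _
      _ = Real.sqrt (frobSq (Whatᴴ * H)) + Real.sqrt (frobSq ((What - Uhat)ᴴ * H)) := by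
          rw [frobSq_neg]
  have hU2 : Real.sqrt lam * Real.sqrt T ≤ Real.sqrt (frobSq (Uhatᴴ * H)) := by
    rw [← Real.sqrt_mul hlam_nonneg]
    exact Real.sqrt_le_sqrt hfrobU
  have hmain : Real.sqrt lam * Real.sqrt T - δ1 * Real.sqrt T
      ≤ Real.sqrt (frobSq (Whatᴴ * H)) := by linarith
  -- rewrite the goal
  have hgoal_tr : (Matrix.trace (Whatᴴ * H * Hᴴ * What)).re = frobSq (Whatᴴ * H) := by
    have h1 : Whatᴴ * H * Hᴴ * What = (Hᴴ * What)ᴴ * (Hᴴ * What) := by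
      rw [conjTranspose_mul, conjTranspose_conjTranspose]
      simp only [Matrix.mul_assoc]
    rw [h1, trace_conjTranspose_mul_re, ← frobSq_conjTranspose (Hᴴ * What),
      conjTranspose_mul, conjTranspose_conjTranspose]
  rw [ge_iff_le, hsval, hgoal_tr, hHH, Real.sqrt_div (frobSq_nonneg _)]
  rcases le_or_gt (Real.sqrt lam - δ1) 0 with h | h
  · exact h.trans (by positivity)
  · rw [le_div_iff₀ (Real.sqrt_pos.mpr hTpos)]
    calc (Real.sqrt lam - δ1) * Real.sqrt T
        = Real.sqrt lam * Real.sqrt T - δ1 * Real.sqrt T := by ring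
      _ ≤ Real.sqrt (frobSq (Whatᴴ * H)) := hmain
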